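/- In the circular representation of a segment cycle containing 2k endpoints, starting from a and alternately applying Ŝ and L̂ visits all 2k elements of Seg(a) before returning to a; equivalently, the permutation obtained by alternating Ŝ and L̂ acts transitively on Seg(a). -/
import Mathlib

private lemma seg_conj {G : Type*} (L S : Equiv.Perm G) (hL2 : L * L = 1) (hS2 : S * S = 1)
    (m : ℤ) (x : G) : L (((L * S) ^ m) x) = ((L * S) ^ (-m)) (L x) := by
  have hLinv : L⁻¹ = L := inv_eq_of_mul_eq_one_left hL2
  have hSinv : S⁻¹ = S := inv_eq_of_mul_eq_one_left hS2
  have hconj : L * (L * S) * L⁻¹ = (L * S)⁻¹ := by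
    rw [hLinv, mul_inv_rev, hLinv, hSinv, ← mul_assoc, hL2, one_mul]
  have h := conj_zpow (i := m) (a := L) (b := L * S)
  rw [hconj, inv_zpow, ← zpow_neg] at h
  have key : (L * S) ^ (-m) * L = L * (L * S) ^ m := by
    rw [h, hLinv, mul_assoc (L * (L * S) ^ m), hL2, mul_one]
  calc L (((L * S) ^ m) x) = (L * (L * S) ^ m) x := rfl
    _ = ((L * S) ^ (-m) * L) x := by rw [key]
    _ = ((L * S) ^ (-m)) (L x) := rfl



/-- In the circular representation of a segment cycle with `2k`
endpoints, the sequence obtained from `a` by alternately applying `Ŝ` and `L̂`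
visits every element of `Seg(a) = Orb(a) ∪ Orb(L̂ a)` exactly once before
returning to `a` after `2k` steps. -/
theorem segment_cycle_traversal {G : Type*} [Fintype G] [DecidableEq G]
    (L S : Equiv.Perm G) (hL2 : L * L = 1) (hS2 : S * S = 1)
    (hLfpf : ∀ x, L x ≠ x) (hSfpf : ∀ x, S x ≠ x)
    (a : G) (k : ℕ) (hk : 0 < k)
    (seq : ℕ → G) (hseq0 : seq 0 = a)
    (hodd : ∀ t, seq (2 * t + 1) = S (seq (2 * t)))
    (heven : ∀ t, seq (2 * t + 2) = L (seq (2 * t + 1)))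
    (hcard : (({x | ∃ m : ℤ, x = ((L * S) ^ m) a} ∪
               {x | ∃ m : ℤ, x = ((L * S) ^ m) (L a)} : Set G)).ncard = 2 * k) :
    Set.InjOn seq (Set.Iio (2 * k)) ∧
    seq '' (Set.Iio (2 * k)) =
      ({x | ∃ m : ℤ, x = ((L * S) ^ m) a} ∪
       {x | ∃ m : ℤ, x = ((L * S) ^ m) (L a)} : Set G) ∧
    seq (2 * k) = a := by
  have hLL : ∀ x : G, L (L x) = x := fun x => by
    have h : (L * L) x = (1 : Equiv.Perm G) x := by rw [hL2]
    simpa using h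
  have hconj : ∀ (m : ℤ) (x : G), L (((L * S) ^ m) x) = ((L * S) ^ (-m)) (L x) :=
    seg_conj L S hL2 hS2
  have hLS : ∀ x : G, L (S x) = (L * S) x := fun x => rfl
  have hS_LT : ∀ x : G, S x = L ((L * S) x) := fun x => (hLL (S x)).symm
  have hkey : ∀ (u v : ℤ) (x : G), ((L * S) ^ u) (((L * S) ^ v) x) = ((L * S) ^ (u + v)) x :=
    fun u v x => by rw [← Equiv.Perm.mul_apply, ← zpow_add]
  have hseqE : ∀ t : ℕ, seq (2 * t) = ((L * S) ^ t) a := by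
    intro t; induction t with
    | zero => simpa using hseq0
    | succ n ih =>
      have h2 : 2 * (n + 1) = 2 * n + 2 := by ring
      rw [h2, heven n, hodd n, ih, hLS, pow_succ']
      rfl
  have hseqO : ∀ t : ℕ, seq (2 * t + 1) = L (((L * S) ^ (t + 1)) a) := by
    intro t
    rw [hodd t, hseqE t, hS_LT, pow_succ']
    rfl
  have hseqE' : ∀ t : ℕ, seq (2 * t) = ((L * S) ^ (t : ℤ)) a := fun t => by
    rw [hseqE, zpow_natCast]
  have hseqO' : ∀ t : ℕ, seq (2 * t + 1) = ((L * S) ^ (-((t : ℤ) + 1))) (L a) := fun t => by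
    rw [hseqO, show ((L * S) ^ (t + 1) : Equiv.Perm G) = (L * S) ^ ((t : ℤ) + 1) from by
      rw [← zpow_natCast]; norm_cast, hconj]
  by_cases hA : L a ∈ {x | ∃ m : ℤ, x = ((L * S) ^ m) a}
  · exfalso
    obtain ⟨j, hj⟩ := hA
    rcases Int.even_or_odd j with ⟨m, hm⟩ | ⟨m, hm⟩
    · apply hLfpf (((L * S) ^ m) a)
      rw [hconj, hj, hkey]
      congr 2
      omega
    · apply hSfpf (((L * S) ^ m) a)
      have h1 : (L * S) (((L * S) ^ m) a) = ((L * S) ^ (1 + m)) a := by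
        rw [show ((L * S) ^ (1 + m) : Equiv.Perm G) = (L * S) * (L * S) ^ m from by
          rw [zpow_add, zpow_one]]
        rfl
      rw [hS_LT, h1, hconj, hj, hkey]
      congr 2
      omega
  · -- disjoint orbit case
    set p := Function.minimalPeriod (⇑(L * S)) a with hpdef
    have hper : Function.IsPeriodicPt (⇑(L * S)) (orderOf (L * S)) a := by
      show (⇑(L * S))^[orderOf (L * S)] a = a
      rw [← Equiv.Perm.coe_pow, pow_orderOf_eq_one]
      rfl
    have hppos : 0 < p := hper.minimalPeriod_pos (orderOf_pos _)
    have hpa : ((L * S) ^ p) a = a := by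
      have h := Function.isPeriodicPt_minimalPeriod (⇑(L * S)) a
      rwa [Function.IsPeriodicPt, Function.IsFixedPt, ← Equiv.Perm.coe_pow] at h
    have hpa' : ((L * S) ^ ((p : ℕ) : ℤ)) a = a := by rw [zpow_natCast]; exact hpa
    have hmodgen : ∀ x : G, ((L * S) ^ ((p : ℕ) : ℤ)) x = x →
        ∀ m : ℤ, ((L * S) ^ m) x = ((L * S) ^ (m % (p : ℤ))) x := by
      intro x hx m
      have hfix : (((L * S) ^ ((p : ℕ) : ℤ)) ^ (m / (p : ℤ))) x = x :=
        Equiv.Perm.zpow_apply_eq_self_of_apply_eq_self hx _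
      calc ((L * S) ^ m) x = ((L * S) ^ (m % (p : ℤ) + (p : ℤ) * (m / (p : ℤ)))) x := by
            rw [Int.emod_add_mul_ediv]
        _ = ((L * S) ^ (m % (p : ℤ))) ((((L * S) ^ ((p : ℕ) : ℤ)) ^ (m / (p : ℤ))) x) := by
            rw [zpow_add, zpow_mul, Equiv.Perm.mul_apply]
        _ = ((L * S) ^ (m % (p : ℤ))) x := by rw [hfix]
    have hmod := hmodgen a hpa'
    have hinjp : ∀ s t : ℕ, s < p → t < p → ((L * S) ^ s) a = ((L * S) ^ t) a → s = t := by
      intro s t hs ht h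
      exact Function.iterate_injOn_Iio_minimalPeriod (f := ⇑(L * S)) (x := a)
        (Set.mem_Iio.mpr hs) (Set.mem_Iio.mpr ht) h
    have hAim : {x | ∃ m : ℤ, x = ((L * S) ^ m) a} = (fun i : ℕ => ((L * S) ^ i) a) '' Set.Iio p := by
      apply Set.Subset.antisymm
      · rintro x ⟨m, rfl⟩
        have h2 : 0 ≤ m % (p : ℤ) := Int.emod_nonneg m (by positivity)
        have h3 : m % (p : ℤ) < (p : ℤ) := Int.emod_lt_of_pos m (by exact_mod_cast hppos)
        refine ⟨(m % (p : ℤ)).toNat, Set.mem_Iio.mpr (by omega), ?_⟩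
        simp only []
        rw [← zpow_natCast, Int.toNat_of_nonneg h2]
        exact (hmod m).symm
      · rintro x ⟨i, hi, rfl⟩
        exact ⟨(i : ℤ), by rw [zpow_natCast]⟩
    have hAcard : ({x | ∃ m : ℤ, x = ((L * S) ^ m) a} : Set G).ncard = p := by
      have hinjOn : Set.InjOn (fun i : ℕ => ((L * S) ^ i) a) (Set.Iio p) := by
        intro s hs t ht h
        exact hinjp s t (Set.mem_Iio.mp hs) (Set.mem_Iio.mp ht) h
      rw [hAim, Set.ncard_image_of_injOn hinjOn,
        ← Finset.coe_Iio, Set.ncard_coe_finset, Nat.card_Iio]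
    have hBL : ({x | ∃ m : ℤ, x = ((L * S) ^ m) (L a)} : Set G) =
        L '' {x | ∃ m : ℤ, x = ((L * S) ^ m) a} := by
      apply Set.Subset.antisymm
      · rintro x ⟨m, rfl⟩
        refine ⟨((L * S) ^ (-m)) a, ⟨-m, rfl⟩, ?_⟩
        rw [hconj]; simp
      · rintro x ⟨y, ⟨m, rfl⟩, rfl⟩
        exact ⟨-m, hconj m a⟩
    have hBcard : ({x | ∃ m : ℤ, x = ((L * S) ^ m) (L a)} : Set G).ncard = p := by
      rw [hBL, Set.ncard_image_of_injective _ L.injective, hAcard]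
    have hdisj : Disjoint ({x | ∃ m : ℤ, x = ((L * S) ^ m) a} : Set G)
        ({x | ∃ m : ℤ, x = ((L * S) ^ m) (L a)} : Set G) := by
      rw [Set.disjoint_left]
      rintro x ⟨m, rfl⟩ ⟨n, hn⟩
      apply hA
      refine ⟨m - n, ?_⟩
      have h1 : ((L * S) ^ (-n)) (((L * S) ^ n) (L a)) = L a := by
        rw [hkey]; simp
      rw [← hn] at h1
      rw [← h1, hkey]
      congr 2
      omega
    have hcard2 := hcard
    rw [Set.ncard_union_eq hdisj (Set.toFinite _) (Set.toFinite _), hAcard, hBcard] at hcard2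
    have hpk : p = k := by omega
    have hpLa : ((L * S) ^ ((p : ℕ) : ℤ)) (L a) = L a := by
      have h1 : ((L * S) ^ (-((p : ℕ) : ℤ))) a = a := by
        conv_lhs => rw [← hpa']
        rw [hkey]
        simp
      have h2 := hconj (-((p : ℕ) : ℤ)) a
      rw [h1] at h2
      simpa using h2.symm
    refine ⟨?_, ?_, ?_⟩
    · -- injectivity
      intro i hi j hj hij
      have hi' : i < 2 * k := hi
      have hj' : j < 2 * k := hj
      have hEO : ∀ ti tj : ℕ, ((L * S) ^ (ti : ℤ)) a = L (((L * S) ^ (tj + 1)) a) → False := by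
        intro ti tj h
        apply hA
        refine ⟨(ti : ℤ) + ((tj : ℤ) + 1), ?_⟩
        have h1 : L (((L * S) ^ (ti : ℤ)) a) = ((L * S) ^ (tj + 1)) a := by
          rw [h, hLL]
        rw [hconj] at h1
        calc L a = ((L * S) ^ (ti : ℤ)) (((L * S) ^ (-(ti : ℤ))) (L a)) := by
              rw [hkey]; simp
          _ = ((L * S) ^ (ti : ℤ)) (((L * S) ^ (tj + 1)) a) := by rw [h1]
          _ = ((L * S) ^ ((ti : ℤ) + ((tj : ℤ) + 1))) a := by
              rw [show ((L * S) ^ (tj + 1) : Equiv.Perm G) = (L * S) ^ (((tj : ℤ)) + 1) from by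
                rw [← zpow_natCast]; norm_cast, hkey]
      rcases Nat.even_or_odd i with ⟨ti, hti⟩ | ⟨ti, hti⟩ <;>
        rcases Nat.even_or_odd j with ⟨tj, htj⟩ | ⟨tj, htj⟩
      · -- even, even
        rw [show i = 2 * ti from by omega, show j = 2 * tj from by omega, hseqE, hseqE] at hij
        have := hinjp ti tj (by omega) (by omega) hij
        omega
      · -- even, odd
        exfalso
        rw [show i = 2 * ti from by omega, show j = 2 * tj + 1 from by omega,
          hseqE', hseqO] at hij
        exact hEO ti tj hij
      · -- odd, even
        exfalso
        rw [show i = 2 * ti + 1 from by omega, show j = 2 * tj from by omega,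
          hseqO, hseqE'] at hij
        exact hEO tj ti hij.symm
      · -- odd, odd
        rw [show i = 2 * ti + 1 from by omega, show j = 2 * tj + 1 from by omega,
          hseqO, hseqO] at hij
        have h1 : ((L * S) ^ (ti + 1)) a = ((L * S) ^ (tj + 1)) a := by
          have := congrArg L hij
          rwa [hLL, hLL] at this
        rw [pow_succ', pow_succ', Equiv.Perm.mul_apply, Equiv.Perm.mul_apply] at h1
        have h2 := (L * S).injective h1
        have := hinjp ti tj (by omega) (by omega) h2
        omega
    · -- image
      apply Set.Subset.antisymm
      · rintro x ⟨i, hi, rfl⟩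
        have hi' : i < 2 * k := hi
        rcases Nat.even_or_odd i with ⟨t, ht⟩ | ⟨t, ht⟩
        · rw [Set.mem_union]
          left
          exact ⟨(t : ℤ), by rw [show i = 2 * t from by omega, hseqE']⟩
        · rw [Set.mem_union]
          right
          exact ⟨-((t : ℤ) + 1), by rw [show i = 2 * t + 1 from by omega, hseqO']⟩
      · rintro x (⟨m, rfl⟩ | ⟨m, rfl⟩)
        · have h2 : 0 ≤ m % (p : ℤ) := Int.emod_nonneg m (by positivity)
          have h3 : m % (p : ℤ) < (p : ℤ) := Int.emod_lt_of_pos m (by exact_mod_cast hppos)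
          refine ⟨2 * (m % (p : ℤ)).toNat, Set.mem_Iio.mpr (by omega), ?_⟩
          rw [hseqE', Int.toNat_of_nonneg h2]
          exact (hmod m).symm
        · set u : ℤ := (-m - 1) % (p : ℤ) with hu
          have hu0 : 0 ≤ u := Int.emod_nonneg _ (by positivity)
          have hup : u < (p : ℤ) := Int.emod_lt_of_pos _ (by exact_mod_cast hppos)
          refine ⟨2 * u.toNat + 1, Set.mem_Iio.mpr (by omega), ?_⟩
          rw [hseqO', Int.toNat_of_nonneg hu0]
          rw [hmodgen (L a) hpLa (-(u + 1)), hmodgen (L a) hpLa m]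
          congr 2
          have h1 : u % (p : ℤ) = (-m - 1) % (p : ℤ) := Int.emod_emod_of_dvd _ dvd_rfl
          have h2 : Int.ModEq (p : ℤ) (-(u + 1)) (-((-m - 1) + 1)) :=
            (Int.ModEq.add_right 1 h1).neg
          have h3 : -((-m - 1) + 1) = m := by ring
          rw [h3] at h2
          exact h2
    · -- return
      rw [hseqE k, ← hpk]
      exact hpa
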